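/- The generating function for stacks with summits satisfies ∑_{m ≥ 0} q^m/((q;q)_m)² = ((q;q)_∞)^{-2} (1 - L(q)), where L(q) := ∑_{n ≥ 1} (-1)^{n-1} q^{n(n+1)/2}, as an identity of formal power series. -/

import Mathlib

open PowerSeries

/-- The q-Pochhammer symbol `(q;q)_m = ∏_{j=1}^m (1 - q^j)`. -/
noncomputable def qPoch (m : ℕ) : PowerSeries ℚ :=
  ∏ j ∈ Finset.range m, (1 - PowerSeries.X ^ (j + 1))

/-- The infinite product `(q;q)_∞`, defined coefficientwise. -/
noncomputable def qPochInf : PowerSeries ℚ :=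
  PowerSeries.mk fun n => PowerSeries.coeff n (qPoch (n + 1))

/-- The formal sum `∑_{m ≥ 0} F m` of a family of power series in which the `m`-th
term has order at least `m`, defined coefficientwise. -/
noncomputable def formalSum (F : ℕ → PowerSeries ℚ) : PowerSeries ℚ :=
  PowerSeries.mk fun n => ∑ m ∈ Finset.range (n + 1), PowerSeries.coeff n (F m)

/-- The false theta function `L(q) = ∑_{n ≥ 1} (-1)^{n-1} q^{n(n+1)/2}`
(the sum over `n ≥ 1` is reindexed by `n = k + 1`). -/
noncomputable def falseTheta : PowerSeries ℚ :=
  formalSum fun k => (-1 : PowerSeries ℚ) ^ k * X ^ ((k + 1) * (k + 2) / 2)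

/-! ### Auxiliary development -/

open Finset

/-- Finite truncation of the tail product `(q^{m+1};q)_∞`. -/
noncomputable def tProd (m N : ℕ) : PowerSeries ℚ :=
  ∏ j ∈ Finset.range N, (1 - PowerSeries.X ^ (m + 1 + j))

/-- The tail product `(q^{m+1};q)_∞`, defined coefficientwise. -/
noncomputable def tp (m : ℕ) : PowerSeries ℚ :=
  PowerSeries.mk fun n => PowerSeries.coeff n (tProd m n)

lemma coeff_one_sub_X_pow_mul (A : PowerSeries ℚ) {n e : ℕ} (h : n < e) :
    PowerSeries.coeff n (A * (1 - X ^ e)) = PowerSeries.coeff n A := by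
  rw [mul_sub, mul_one, map_sub, PowerSeries.coeff_mul_X_pow', if_neg (by omega), sub_zero]

lemma coeff_X_pow_mul_eq_zero {C : PowerSeries ℚ} {m k : ℕ} (h : k < m) :
    PowerSeries.coeff k (X ^ m * C) = 0 := by
  rw [mul_comm, PowerSeries.coeff_mul_X_pow', if_neg (by omega)]

lemma coeff_tProd_stable (m : ℕ) {n N : ℕ} (h : n ≤ N) :
    PowerSeries.coeff n (tProd m N) = PowerSeries.coeff n (tProd m n) := by
  induction N with
  | zero =>
    have hn : n = 0 := by omega
    subst hn; rfl
  | succ N ih =>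
    rcases Nat.eq_or_lt_of_le h with h' | h'
    · rw [h']
    · have hn : n ≤ N := by omega
      rw [tProd, Finset.prod_range_succ, ← tProd, coeff_one_sub_X_pow_mul _ (by omega), ih hn]

lemma coeff_tp (m n : ℕ) :
    PowerSeries.coeff n (tp m) = PowerSeries.coeff n (tProd m n) :=
  PowerSeries.coeff_mk _ _

lemma coeff_mul_congr {A B : PowerSeries ℚ} (C : PowerSeries ℚ) (n : ℕ)
    (h : ∀ k ≤ n, PowerSeries.coeff k A = PowerSeries.coeff k B) :
    PowerSeries.coeff n (C * A) = PowerSeries.coeff n (C * B) := by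
  rw [PowerSeries.coeff_mul, PowerSeries.coeff_mul]
  refine Finset.sum_congr rfl fun p hp => ?_
  rw [Finset.HasAntidiagonal.mem_antidiagonal] at hp
  rw [h p.2 (by omega)]

lemma tp_rel (m : ℕ) : tp m = (1 - X ^ (m + 1)) * tp (m + 1) := by
  ext n
  rw [coeff_tp]
  have h1 : PowerSeries.coeff n ((1 - X ^ (m + 1)) * tp (m + 1)) =
      PowerSeries.coeff n ((1 - X ^ (m + 1)) * tProd (m + 1) n) := by
    refine coeff_mul_congr _ n fun k hk => ?_
    rw [coeff_tp, coeff_tProd_stable _ hk]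
  have hfac : ∏ j ∈ Finset.range n, (1 - X ^ (m + 1 + (j + 1)) : PowerSeries ℚ) =
      tProd (m + 1) n := by
    rw [tProd]
    refine Finset.prod_congr rfl fun j _ => ?_
    rw [show m + 1 + (j + 1) = m + 1 + 1 + j by omega]
  have h2 : tProd m (n + 1) = (1 - X ^ (m + 1)) * tProd (m + 1) n := by
    rw [tProd, Finset.prod_range_succ', hfac]
    ring
  rw [h1, ← h2, coeff_tProd_stable _ (Nat.le_succ n)]

lemma coeff_qPoch_stable {n N : ℕ} (h : n ≤ N) :
    PowerSeries.coeff n (qPoch N) = PowerSeries.coeff n (qPoch n) := by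
  induction N with
  | zero =>
    have hn : n = 0 := by omega
    subst hn; rfl
  | succ N ih =>
    rcases Nat.eq_or_lt_of_le h with h' | h'
    · rw [h']
    · have hn : n ≤ N := by omega
      rw [qPoch, Finset.prod_range_succ, ← qPoch, coeff_one_sub_X_pow_mul _ (by omega), ih hn]

lemma coeff_qPochInf (n : ℕ) :
    PowerSeries.coeff n qPochInf = PowerSeries.coeff n (qPoch n) := by
  rw [qPochInf, PowerSeries.coeff_mk, coeff_qPoch_stable (Nat.le_succ n)]

lemma qPoch_mul_tp (m : ℕ) : qPoch m * tp m = qPochInf := by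
  ext n
  have h1 : PowerSeries.coeff n (qPoch m * tp m) =
      PowerSeries.coeff n (qPoch m * tProd m n) := by
    refine coeff_mul_congr _ n fun k hk => ?_
    rw [coeff_tp, coeff_tProd_stable _ hk]
  have hfac : tProd m n = ∏ j ∈ Finset.range n, (1 - X ^ (m + j + 1) : PowerSeries ℚ) := by
    rw [tProd]
    refine Finset.prod_congr rfl fun j _ => ?_
    rw [show m + 1 + j = m + j + 1 by omega]
  have h2 : qPoch m * tProd m n = qPoch (m + n) := by
    rw [hfac, qPoch, qPoch, Finset.prod_range_add]
  rw [h1, h2, coeff_qPoch_stable (Nat.le_add_left n m), coeff_qPochInf]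

lemma coeff_tp_low {m k : ℕ} (h : k ≤ m) :
    PowerSeries.coeff k (tp m) = PowerSeries.coeff k (1 : PowerSeries ℚ) := by
  rw [coeff_tp]
  have : ∀ N : ℕ, PowerSeries.coeff k (tProd m N) =
      PowerSeries.coeff k (1 : PowerSeries ℚ) := by
    intro N
    induction N with
    | zero => rfl
    | succ N ih =>
      rw [tProd, Finset.prod_range_succ, ← tProd,
        coeff_one_sub_X_pow_mul (tProd m N) (show k < m + 1 + N by omega), ih]
  exact this k

lemma coeff_formalSum (F : ℕ → PowerSeries ℚ) (n : ℕ) :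
    PowerSeries.coeff n (formalSum F) =
      ∑ m ∈ Finset.range (n + 1), PowerSeries.coeff n (F m) :=
  PowerSeries.coeff_mk _ _

lemma mul_formalSum (C : PowerSeries ℚ) (F : ℕ → PowerSeries ℚ)
    (hF : ∀ m k, k < m → PowerSeries.coeff k (F m) = 0) :
    C * formalSum F = formalSum fun m => C * F m := by
  ext n
  rw [PowerSeries.coeff_mul, coeff_formalSum]
  calc
    ∑ p ∈ antidiagonal n, PowerSeries.coeff p.1 C * PowerSeries.coeff p.2 (formalSum F)
        = ∑ p ∈ antidiagonal n, ∑ m ∈ Finset.range (n + 1),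
            PowerSeries.coeff p.1 C * PowerSeries.coeff p.2 (F m) := by
      refine Finset.sum_congr rfl fun p hp => ?_
      rw [Finset.HasAntidiagonal.mem_antidiagonal] at hp
      rw [coeff_formalSum, Finset.mul_sum]
      refine Finset.sum_subset (Finset.range_subset_range.2 (by omega)) fun m _ hm => ?_
      rw [Finset.mem_range, not_lt] at hm
      rw [hF m p.2 (by omega), mul_zero]
    _ = ∑ m ∈ Finset.range (n + 1), ∑ p ∈ antidiagonal n,
            PowerSeries.coeff p.1 C * PowerSeries.coeff p.2 (F m) := Finset.sum_comm
    _ = ∑ m ∈ Finset.range (n + 1), PowerSeries.coeff n (C * F m) := by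
      refine Finset.sum_congr rfl fun m _ => ?_
      rw [PowerSeries.coeff_mul]

/-- `V j = ∑_m q^m f_m f_{m+j}` where `f_m` is the tail product. -/
noncomputable def Vs (j : ℕ) : PowerSeries ℚ :=
  formalSum fun m => X ^ m * (tp m * tp (m + j))

lemma V_step (j m : ℕ) :
    X ^ m * (tp m * tp (m + j)) + X ^ (j + 1) * (X ^ m * (tp m * tp (m + (j + 1)))) =
      ((1 - X ^ (m + 1)) * tp (m + 1)) * tp (m + 1 + j) -
        ((1 - X ^ m) * tp m) * tp (m + j) := by
  rw [← tp_rel m]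
  rw [show m + 1 + j = m + (j + 1) by omega]
  rw [tp_rel (m + j)]
  rw [show m + j + 1 = m + (j + 1) by omega]
  ring

lemma V_rec (j : ℕ) : Vs j + X ^ (j + 1) * Vs (j + 1) = 1 := by
  rw [Vs, Vs, mul_formalSum _ _ (fun m k h => coeff_X_pow_mul_eq_zero h)]
  ext n
  rw [map_add, coeff_formalSum, coeff_formalSum, ← Finset.sum_add_distrib]
  have key : ∀ m ∈ Finset.range (n + 1),
      PowerSeries.coeff n (X ^ m * (tp m * tp (m + j))) +
        PowerSeries.coeff n (X ^ (j + 1) * (X ^ m * (tp m * tp (m + (j + 1))))) =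
      (fun i => PowerSeries.coeff n (((1 - X ^ i) * tp i) * tp (i + j))) (m + 1) -
        (fun i => PowerSeries.coeff n (((1 - X ^ i) * tp i) * tp (i + j))) m := by
    intro m _
    simp only
    rw [← map_add, V_step, map_sub]
  rw [Finset.sum_congr rfl key, Finset.sum_range_sub
    (fun i => PowerSeries.coeff n (((1 - X ^ i) * tp i) * tp (i + j)))]
  have h0 : ((1 - X ^ 0) * tp 0) * tp (0 + j) = 0 := by
    simp
  rw [h0, map_zero, sub_zero, ← tp_rel n]
  have h1 : PowerSeries.coeff n (tp n * tp (n + 1 + j)) =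
      PowerSeries.coeff n (tp n * 1) := by
    refine coeff_mul_congr _ n fun k hk => ?_
    exact coeff_tp_low (by omega)
  rw [h1, mul_one, coeff_tp_low (le_refl n)]

/-- Triangular numbers as a finite sum. -/
def Tri (k : ℕ) : ℕ := ∑ i ∈ Finset.range (k + 1), i

lemma Tri_succ (k : ℕ) : Tri (k + 1) = Tri k + (k + 1) := by
  rw [Tri, Tri, Finset.sum_range_succ]

lemma Tri_eq (k : ℕ) : Tri (k + 1) = (k + 1) * (k + 2) / 2 := by
  rw [Tri, Finset.sum_range_id, Nat.add_sub_cancel]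
  congr 1
  ring

lemma Tri_ge (k : ℕ) : k + 1 ≤ Tri (k + 1) := by
  rw [Tri_succ]; omega

lemma V0_unfold (K : ℕ) :
    Vs 0 = (∑ k ∈ Finset.range (K + 1), (-1 : PowerSeries ℚ) ^ k * X ^ Tri k) +
      (-1 : PowerSeries ℚ) ^ (K + 1) * (X ^ Tri (K + 1) * Vs (K + 1)) := by
  induction K with
  | zero =>
    have h := V_rec 0
    have ht0 : Tri 0 = 0 := rfl
    have ht1 : Tri 1 = 1 := rfl
    rw [Finset.sum_range_one, ht0, ht1]
    linear_combination h
  | succ K ih =>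
    have h := V_rec (K + 1)
    rw [ih, Finset.sum_range_succ (fun k => (-1 : PowerSeries ℚ) ^ k * X ^ Tri k) (K + 1),
      Tri_succ (K + 1), pow_add]
    linear_combination ((-1 : PowerSeries ℚ) ^ (K + 1) * X ^ Tri (K + 1)) * h

lemma coeff_neg_one_pow_mul (k n : ℕ) (W : PowerSeries ℚ) :
    PowerSeries.coeff n ((-1 : PowerSeries ℚ) ^ k * W) =
      (-1 : ℚ) ^ k * PowerSeries.coeff n W := by
  rcases Nat.even_or_odd k with h | h
  · rw [h.neg_one_pow, h.neg_one_pow, one_mul, one_mul]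
  · rw [h.neg_one_pow, h.neg_one_pow, neg_one_mul, neg_one_mul, map_neg]

lemma V0_eq : Vs 0 = 1 - falseTheta := by
  ext n
  rw [V0_unfold n, map_add, map_sum, coeff_neg_one_pow_mul,
    coeff_X_pow_mul_eq_zero (by have := Tri_ge n; omega), mul_zero, add_zero]
  rw [map_sub, falseTheta, coeff_formalSum]
  rw [Finset.sum_range_succ' (fun k => PowerSeries.coeff n ((-1 : PowerSeries ℚ) ^ k * X ^ Tri k)) n]
  have ht0 : Tri 0 = 0 := rfl
  rw [ht0, pow_zero, pow_zero, one_mul]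
  have hlast : PowerSeries.coeff n
      ((-1 : PowerSeries ℚ) ^ n * X ^ ((n + 1) * (n + 2) / 2)) = 0 := by
    rw [coeff_neg_one_pow_mul, ← Tri_eq, PowerSeries.coeff_X_pow,
      if_neg (by have := Tri_ge n; omega), mul_zero]
  rw [Finset.sum_range_succ, hlast, add_zero]
  have hs : ∀ k ∈ Finset.range n,
      PowerSeries.coeff n ((-1 : PowerSeries ℚ) ^ (k + 1) * X ^ Tri (k + 1)) =
        - PowerSeries.coeff n ((-1 : PowerSeries ℚ) ^ k * X ^ ((k + 1) * (k + 2) / 2)) := by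
    intro k _
    rw [coeff_neg_one_pow_mul, coeff_neg_one_pow_mul, ← Tri_eq, pow_succ]
    ring
  rw [Finset.sum_congr rfl hs, Finset.sum_neg_distrib]
  ring

lemma constantCoeff_qPoch (m : ℕ) : PowerSeries.constantCoeff (qPoch m) = 1 := by
  rw [qPoch, map_prod]
  refine Finset.prod_eq_one fun j _ => ?_
  rw [map_sub, map_one, map_pow, PowerSeries.constantCoeff_X, zero_pow (by omega), sub_zero]

lemma constantCoeff_qPochInf : PowerSeries.constantCoeff qPochInf = 1 := by
  rw [← PowerSeries.coeff_zero_eq_constantCoeff_apply, coeff_qPochInf,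
    PowerSeries.coeff_zero_eq_constantCoeff_apply, constantCoeff_qPoch]

lemma qPoch_mul_inv (m : ℕ) : qPoch m * (qPoch m)⁻¹ = 1 :=
  PowerSeries.mul_inv_cancel _ (by rw [constantCoeff_qPoch]; exact one_ne_zero)

lemma main_identity :
    qPochInf ^ 2 * formalSum (fun m => X ^ m * ((qPoch m)⁻¹) ^ 2) = 1 - falseTheta := by
  rw [mul_formalSum _ _ (fun m k h => coeff_X_pow_mul_eq_zero h)]
  have hterm : (fun m => qPochInf ^ 2 * (X ^ m * ((qPoch m)⁻¹) ^ 2)) =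
      fun m => X ^ m * (tp m * tp (m + 0)) := by
    funext m
    rw [Nat.add_zero, ← qPoch_mul_tp m]
    calc (qPoch m * tp m) ^ 2 * (X ^ m * ((qPoch m)⁻¹) ^ 2)
        = X ^ m * (tp m * tp m) * (qPoch m * (qPoch m)⁻¹) ^ 2 := by ring
      _ = X ^ m * (tp m * tp m) := by rw [qPoch_mul_inv, one_pow, mul_one]
  rw [hterm]
  exact V0_eq

/-- `∑_{m ≥ 0} q^m/((q;q)_m)² = ((q;q)_∞)⁻² (1 - L(q))`, the generating function
identity for stacks with summits. -/
theorem stacksWithSummits_genFn :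
    formalSum (fun m => X ^ m * ((qPoch m)⁻¹) ^ 2) =
      (qPochInf⁻¹) ^ 2 * (1 - falseTheta) := by
  have h1 : qPochInf * qPochInf⁻¹ = 1 :=
    PowerSeries.mul_inv_cancel _ (by rw [constantCoeff_qPochInf]; exact one_ne_zero)
  calc
    formalSum (fun m => X ^ m * ((qPoch m)⁻¹) ^ 2)
        = (qPochInf * qPochInf⁻¹) ^ 2 * formalSum (fun m => X ^ m * ((qPoch m)⁻¹) ^ 2) := by
      rw [h1, one_pow, one_mul]
    _ = (qPochInf⁻¹) ^ 2 * (qPochInf ^ 2 * formalSum (fun m => X ^ m * ((qPoch m)⁻¹) ^ 2)) := by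
      ring
    _ = (qPochInf⁻¹) ^ 2 * (1 - falseTheta) := by rw [main_identity]
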